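/- The map g is topologically transitive on [−1,1]: for every pair of nonempty open sets U, V ⊆ [−1,1] there exists a positive integer n such that gⁿ(U) ∩ V ≠ ∅. -/

import Mathlib

open Filter

/-- The map `g : [-1,1] → [-1,1]` given by `g(x) = 2x + 2` on `[-1,-1/2]`,
`g(x) = -2x` on `[-1/2,0]`, and `g(x) = -x` on `[0,1]`. -/
noncomputable def gMap (x : ℝ) : ℝ :=
  if x ≤ -(1 / 2) then 2 * x + 2 else if x ≤ 0 then -2 * x else -x

noncomputable def tMap (x : ℝ) : ℝ := if x ≤ 1/2 then 2*x else 2 - 2*x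

lemma tStep (n k : ℕ) (hk : k < 2^(n+1)) :
    ∃ k' : ℕ, k' < 2^n ∧ Set.Icc ((k':ℝ)/2^n) ((k'+1)/2^n) ⊆
      tMap '' Set.Icc ((k:ℝ)/2^(n+1)) (((k:ℝ)+1)/2^(n+1)) := by
  have hP : (0:ℝ) < 2^n := by positivity
  have hQ : (0:ℝ) < 2^(n+1) := by positivity
  have hE : (2:ℝ)^(n+1) = 2 * 2^n := by rw [pow_succ]; ring
  by_cases hk2 : k < 2^n
  · refine ⟨k, hk2, fun y hy => ?_⟩
    obtain ⟨hy1, hy2⟩ := hy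
    have hkr : ((k:ℝ)+1) ≤ 2^n := by
      have : (k:ℝ)+1 ≤ ((2^n : ℕ):ℝ) := by exact_mod_cast hk2
      simpa using this
    have hy1' : (k:ℝ) ≤ y * 2^n := by rw [div_le_iff₀ hP] at hy1; linarith
    have hy2' : y * 2^n ≤ (k:ℝ)+1 := by rw [le_div_iff₀ hP] at hy2; linarith
    have hyle : y ≤ 1 := by
      rcases le_or_gt y 1 with h | h
      · exact h
      · nlinarith
    refine ⟨y/2, ⟨?_, ?_⟩, ?_⟩
    · rw [div_le_div_iff₀ hQ (by norm_num : (0:ℝ) < 2), hE]; nlinarith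
    · rw [div_le_div_iff₀ (by norm_num : (0:ℝ) < 2) hQ, hE]; nlinarith
    · unfold tMap; rw [if_pos (by linarith)]; ring
  · push_neg at hk2
    refine ⟨2^(n+1) - 1 - k, ?_, fun y hy => ?_⟩
    · omega
    · have hc : ((2^(n+1) - 1 - k : ℕ) : ℝ) = 2^(n+1) - 1 - (k:ℝ) := by
        have h1 : k + 1 ≤ 2^(n+1) := hk
        push_cast [Nat.cast_sub (by omega : k ≤ 2^(n+1) - 1), Nat.cast_sub (by omega : 1 ≤ 2^(n+1))]
        push_cast
        ring
      rw [hc] at hy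
      obtain ⟨hy1, hy2⟩ := hy
      have hy1' : 2^(n+1) - 1 - (k:ℝ) ≤ y * 2^n := by rw [div_le_iff₀ hP] at hy1; linarith
      have hy2' : y * 2^n ≤ 2^(n+1) - (k:ℝ) := by rw [le_div_iff₀ hP] at hy2; linarith
      have hyle : y ≤ 1 := by
        have hkr : ((2^n : ℕ):ℝ) ≤ (k:ℝ) := by exact_mod_cast hk2
        simp only [Nat.cast_pow, Nat.cast_ofNat] at hkr
        nlinarith [hE]
      refine ⟨1 - y/2, ⟨?_, ?_⟩, ?_⟩
      · rw [div_le_iff₀ hQ, hE]; nlinarith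
      · rw [le_div_iff₀ hQ, hE]; nlinarith
      · unfold tMap; split_ifs with h <;> nlinarith

lemma tDyadic (n : ℕ) : ∀ k : ℕ, k < 2^n → Set.Icc (0:ℝ) 1 ⊆
    tMap^[n] '' Set.Icc ((k:ℝ)/2^n) (((k:ℝ)+1)/2^n) := by
  induction n with
  | zero =>
    intro k hk
    interval_cases k
    simp
  | succ n ih =>
    intro k hk
    obtain ⟨k', hk', hsub⟩ := tStep n k hk
    intro y hy
    obtain ⟨x, hx, hTx⟩ := ih k' hk' hy
    obtain ⟨z, hz, hTz⟩ := hsub hx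
    exact ⟨z, hz, by rw [Function.iterate_succ_apply, hTz, hTx]⟩
lemma tMap_mem {x : ℝ} (hx : x ∈ Set.Icc (0:ℝ) 1) : tMap x ∈ Set.Icc (0:ℝ) 1 := by
  obtain ⟨h1, h2⟩ := hx
  unfold tMap; split_ifs <;> constructor <;> linarith

lemma gg_eq {x : ℝ} (hx : x ∈ Set.Icc (-1:ℝ) 0) : gMap (gMap x) = -tMap (-x) := by
  obtain ⟨h1, h2⟩ := hx
  unfold gMap tMap; split_ifs <;> linarith

lemma g2n (n : ℕ) : ∀ x ∈ Set.Icc (-1:ℝ) 0, gMap^[2*n] x = -(tMap^[n] (-x)) := by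
  induction n with
  | zero => intro x _; simp
  | succ n ih =>
    intro x hx
    have h2 : 2*(n+1) = 2*n + 1 + 1 := by ring
    have hmem : -tMap (-x) ∈ Set.Icc (-1:ℝ) 0 := by
      have := tMap_mem (x := -x) ⟨by linarith [hx.2], by linarith [hx.1]⟩
      exact ⟨by linarith [this.2], by linarith [this.1]⟩
    rw [h2, Function.iterate_succ_apply, Function.iterate_succ_apply, gg_eq hx, ih _ hmem,
      neg_neg, Function.iterate_succ_apply]

lemma g_image1 {a b : ℝ} (h : Set.Icc a b ⊆ Set.Icc (0:ℝ) 1) :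
    Set.Icc (-b) (-a) ⊆ gMap '' Set.Icc a b := by
  intro y hy
  obtain ⟨hy1, hy2⟩ := hy
  have hab : a ≤ b := by linarith
  have ha := h ⟨le_refl a, hab⟩
  have hb := h ⟨hab, le_refl b⟩
  refine ⟨-y, ⟨by linarith, by linarith⟩, ?_⟩
  unfold gMap
  split_ifs <;> linarith [ha.1, hb.2]

lemma g_image2 : Set.Icc (0:ℝ) 1 ⊆ gMap '' Set.Icc (-1:ℝ) 0 := by
  intro y hy
  obtain ⟨hy1, hy2⟩ := hy
  refine ⟨-y/2, ⟨by linarith, by linarith⟩, ?_⟩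
  unfold gMap
  split_ifs <;> linarith

/-- `g` is topologically transitive on `[-1,1]`: for every pair of nonempty
(relatively) open subsets `U, V` of `[-1,1]` there exists a positive integer `n`
with `gⁿ(U) ∩ V ≠ ∅`. -/
theorem gMap_topologically_transitive :
    ∀ U V : Set ℝ, U ⊆ Set.Icc (-1 : ℝ) 1 → V ⊆ Set.Icc (-1 : ℝ) 1 →
      (∃ U' : Set ℝ, IsOpen U' ∧ U = Set.Icc (-1 : ℝ) 1 ∩ U') →
      (∃ V' : Set ℝ, IsOpen V' ∧ V = Set.Icc (-1 : ℝ) 1 ∩ V') →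
      U.Nonempty → V.Nonempty →
      ∃ n : ℕ, 0 < n ∧ ((gMap^[n] '' U) ∩ V).Nonempty := by
  rintro U V hU hV ⟨U', hU'o, hUeq⟩ ⟨V', hV'o, hVeq⟩ ⟨u, hu⟩ ⟨v, hv⟩
  have huI : u ∈ Set.Icc (-1:ℝ) 1 := hU hu
  have huU' : u ∈ U' := by rw [hUeq] at hu; exact hu.2
  obtain ⟨ε, hε, hball⟩ := Metric.isOpen_iff.1 hU'o u huU'
  set δ := min (ε/2) (1/2) with hδdef
  have hδpos : 0 < δ := by positivity
  have hδε : δ < ε := lt_of_le_of_lt (min_le_left _ _) (by linarith)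
  have hδ2 : δ ≤ 1/2 := min_le_right _ _
  have key : ∀ x : ℝ, |x - u| ≤ δ → x ∈ U' := by
    intro x hx
    apply hball
    rw [Metric.mem_ball, Real.dist_eq]
    exact lt_of_le_of_lt hx hδε
  -- find a nondegenerate closed interval inside [-1,0] that lies in g^[m] '' U
  have main : ∃ (p q : ℝ) (m : ℕ), p < q ∧ Set.Icc p q ⊆ Set.Icc (-1:ℝ) 0 ∧
      Set.Icc p q ⊆ gMap^[m] '' U := by
    obtain ⟨hu1, hu2⟩ := huI
    by_cases hu0 : u ≤ 0
    · refine ⟨max (-1) (u - δ), min 0 (u + δ), 0, ?_, ?_, ?_⟩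
      · apply max_lt <;> apply lt_min <;> linarith
      · intro x hx
        exact ⟨le_trans (le_max_left _ _) hx.1, le_trans hx.2 (min_le_left _ _)⟩
      · simp only [Function.iterate_zero, Set.image_id]
        intro x hx
        have h1 : -1 ≤ x := le_trans (le_max_left _ _) hx.1
        have h2 : x ≤ 0 := le_trans hx.2 (min_le_left _ _)
        have h3 : u - δ ≤ x := le_trans (le_max_right _ _) hx.1
        have h4 : x ≤ u + δ := le_trans hx.2 (min_le_right _ _)
        rw [hUeq]
        exact ⟨⟨h1, by linarith⟩, key x (abs_le.2 ⟨by linarith, by linarith⟩)⟩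
    · push_neg at hu0
      set p0 := max 0 (u - δ) with hp0
      set q0 := min 1 (u + δ) with hq0
      have hpq0 : p0 < q0 := by apply max_lt <;> apply lt_min <;> linarith
      have hsub01 : Set.Icc p0 q0 ⊆ Set.Icc (0:ℝ) 1 := by
        intro x hx
        exact ⟨le_trans (le_max_left _ _) hx.1, le_trans hx.2 (min_le_left _ _)⟩
      have hsubU : Set.Icc p0 q0 ⊆ U := by
        intro x hx
        have h1 : 0 ≤ x := le_trans (le_max_left _ _) hx.1
        have h2 : x ≤ 1 := le_trans hx.2 (min_le_left _ _)
        have h3 : u - δ ≤ x := le_trans (le_max_right _ _) hx.1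
        have h4 : x ≤ u + δ := le_trans hx.2 (min_le_right _ _)
        rw [hUeq]
        exact ⟨⟨by linarith, h2⟩, key x (abs_le.2 ⟨by linarith, by linarith⟩)⟩
      refine ⟨-q0, -p0, 1, by linarith, ?_, ?_⟩
      · intro x hx
        have := hsub01 ⟨le_refl p0, hpq0.le⟩
        have := hsub01 ⟨hpq0.le, le_refl q0⟩
        constructor <;> [linarith [hx.1, this.2]; linarith [hx.2, (hsub01 ⟨le_refl p0, hpq0.le⟩).1]]
      · rw [Function.iterate_one]
        exact (g_image1 hsub01).trans (Set.image_mono hsubU)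
  obtain ⟨p, q, m, hpq, hpq0, hpqU⟩ := main
  have hq0 : q ≤ 0 := (hpq0 ⟨hpq.le, le_refl q⟩).2
  have hp1 : -1 ≤ p := (hpq0 ⟨le_refl p, hpq.le⟩).1
  have hq1 : -1 < q := lt_of_le_of_lt hp1 hpq
  -- pick n large
  obtain ⟨n0, hn0⟩ := pow_unbounded_of_one_lt (max (2/(q-p)) (1/(1+q))) (one_lt_two (α := ℝ))
  set n := n0 + 1 with hndef
  have hP : (0:ℝ) < 2^n := by positivity
  have hmono : (2:ℝ)^n0 ≤ 2^n := pow_le_pow_right₀ one_le_two (Nat.le_succ n0)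
  have h1 : 2 < (q-p) * 2^n := by
    have := lt_of_le_of_lt (le_max_left (2/(q-p)) (1/(1+q))) hn0
    rw [div_lt_iff₀ (by linarith)] at this
    nlinarith
  have h2 : 1 < (1+q) * 2^n := by
    have := lt_of_le_of_lt (le_max_right (2/(q-p)) (1/(1+q))) hn0
    rw [div_lt_iff₀ (by linarith)] at this
    nlinarith
  set k := ⌈(-q) * 2^n⌉₊ with hkdef
  have hk1 : (-q) * 2^n ≤ (k:ℝ) := Nat.le_ceil _
  have hk2 : (k:ℝ) < (-q) * 2^n + 1 := Nat.ceil_lt_add_one (by nlinarith)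
  have hklt : k < 2^n := by
    have : (k:ℝ) < ((2^n : ℕ):ℝ) := by push_cast; nlinarith
    exact_mod_cast this
  -- the dyadic interval [-(k+1)/2^n, -k/2^n] sits inside [p,q]
  have hdy : Set.Icc (-((k:ℝ)+1)/2^n) (-(k:ℝ)/2^n) ⊆ Set.Icc p q := by
    intro x hx
    have hxa : -((k:ℝ)+1)/2^n ≥ p := by
      rw [ge_iff_le, le_div_iff₀ hP]; nlinarith
    have hxb : -(k:ℝ)/2^n ≤ q := by
      rw [div_le_iff₀ hP]; nlinarith
    exact ⟨le_trans hxa hx.1, le_trans hx.2 hxb⟩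
  -- cover [-1,0] by g^[2n] of that interval
  have hcover : Set.Icc (-1:ℝ) 0 ⊆ gMap^[2*n] '' Set.Icc (-((k:ℝ)+1)/2^n) (-(k:ℝ)/2^n) := by
    intro y hy
    obtain ⟨x, hx, hTx⟩ := tDyadic n k hklt (show -y ∈ Set.Icc (0:ℝ) 1 from ⟨by linarith [hy.2], by linarith [hy.1]⟩)
    have hxmem : -x ∈ Set.Icc (-((k:ℝ)+1)/2^n) (-(k:ℝ)/2^n) := by
      constructor
      · rw [neg_div]; linarith [hx.2]
      · rw [neg_div]; linarith [hx.1]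
    refine ⟨-x, hxmem, ?_⟩
    rw [g2n n (-x) (hpq0 (hdy hxmem)), neg_neg, hTx]
    ring
  have himg : Set.Icc (-1:ℝ) 0 ⊆ gMap^[2*n + m] '' U := by
    have e : gMap^[2*n + m] '' U = gMap^[2*n] '' (gMap^[m] '' U) := by
      rw [Function.iterate_add, Set.image_comp]
    rw [e]
    exact hcover.trans (Set.image_mono (hdy.trans hpqU))
  have himg2 : Set.Icc (0:ℝ) 1 ⊆ gMap^[2*n + m + 1] '' U := by
    have e : gMap^[2*n + m + 1] '' U = gMap '' (gMap^[2*n + m] '' U) := by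
      rw [Function.iterate_succ', Set.image_comp]
    rw [e]
    exact g_image2.trans (Set.image_mono himg)
  obtain ⟨hv1, hv2⟩ := hV hv
  by_cases hv0 : v ≤ 0
  · exact ⟨2*n + m, by omega, v, himg ⟨hv1, hv0⟩, hv⟩
  · exact ⟨2*n + m + 1, by omega, v, himg2 ⟨by linarith, hv2⟩, hv⟩
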